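/- Let m ≥ 2, n ≥ 1, b > 0, μ ∈ (0, b], d̄ > 0, and let the entries B̃_ji (j ∈ [m], i ∈ [n]) of a random m×n matrix be i.i.d. real random variables taking values in [0, b] with mean μ. Set τ := b·√((log m)/n) and assume μ > τ. Then with probability at least 1 − 1/m, every w ∈ ℝ^m with w ≥ 0 and B̃ᵀw ≤ d̄·e (componentwise, e the all-ones vector of ℝ^n) satisfies Σ_{j=1}^m w_j ≤ d̄/(μ − τ). -/

import Mathlib

open Matrix MeasureTheory ProbabilityTheory Real

lemma hoeff_key {p : ℝ} (hp0 : 0 ≤ p) (hp1 : p ≤ 1) (t : ℝ) :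
    1 - p + p * Real.exp t ≤ Real.exp (p * t + t ^ 2 / 8) := by
  set D : ℝ → ℝ := fun t => 1 - p + p * Real.exp t with hDdef
  have hD : ∀ t, 0 < D t := by
    intro t
    rcases eq_or_lt_of_le hp0 with h | h
    · simp [hDdef, ← h]
    · have := Real.exp_pos t
      have h2 : 0 < p * Real.exp t := by positivity
      show 0 < 1 - p + p * Real.exp t
      nlinarith
  set f1 : ℝ → ℝ := fun t => p + t / 4 - p * Real.exp t / D t with hf1def
  set f2 : ℝ → ℝ := fun t => 1 / 4 - p * Real.exp t * (1 - p) / (D t) ^ 2 with hf2def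
  set f : ℝ → ℝ := fun t => p * t + t ^ 2 / 8 - Real.log (D t) with hfdef
  have hDderiv : ∀ t, HasDerivAt D (p * Real.exp t) t := by
    intro t
    exact ((Real.hasDerivAt_exp t).const_mul p).const_add (1 - p)
  have hf : ∀ t, HasDerivAt f (f1 t) t := by
    intro t
    have h1 : HasDerivAt (fun t : ℝ => p * t + t ^ 2 / 8) (p + 2 * t / 8) t := by
      refine (((hasDerivAt_id t).const_mul p).add
        (((hasDerivAt_pow 2 t)).div_const 8)).congr_deriv (by norm_num)
    have h2 : HasDerivAt (fun t => Real.log (D t)) ((D t)⁻¹ * (p * Real.exp t)) t :=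
      (Real.hasDerivAt_log (hD t).ne').comp t (hDderiv t)
    have := h1.sub h2
    refine this.congr_deriv ?_
    have := (hD t).ne'
    simp only [hf1def]
    ring
  have hf1 : ∀ t, HasDerivAt f1 (f2 t) t := by
    intro t
    have hq : HasDerivAt (fun t => p * Real.exp t / D t)
        ((p * Real.exp t * D t - p * Real.exp t * (p * Real.exp t)) / (D t) ^ 2) t :=
      ((Real.hasDerivAt_exp t).const_mul p).div (hDderiv t) (hD t).ne'
    have h1 : HasDerivAt (fun t : ℝ => p + t / 4) (1 / 4) t := by
      simpa using ((hasDerivAt_id t).div_const 4).const_add p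
    have := h1.sub hq
    refine this.congr_deriv ?_
    have hDt := (hD t).ne'
    show _ = 1 / 4 - p * Real.exp t * (1 - p) / (D t) ^ 2
    have hexp : D t - p * Real.exp t = 1 - p := by simp only [hDdef]; ring
    rw [← hexp]
    ring
  have h2 : ∀ t, 0 ≤ f2 t := by
    intro t
    have h4 : 4 * (p * Real.exp t) * (1 - p) ≤ (p * Real.exp t + (1 - p)) ^ 2 :=
      four_mul_le_sq_add _ _
    have hDt : D t = 1 - p + p * Real.exp t := rfl
    have hD2 : 0 < (D t) ^ 2 := pow_pos (hD t) 2
    rw [hf2def, sub_nonneg, div_le_iff₀ hD2]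
    nlinarith
  have hdiff1 : Differentiable ℝ f1 := fun t => (hf1 t).differentiableAt
  have hderiv1 : deriv f1 = f2 := funext fun t => (hf1 t).deriv
  have hmono1 : Monotone f1 := monotone_of_deriv_nonneg hdiff1 fun x => by
    rw [hderiv1]; exact h2 x
  have hf10 : f1 0 = 0 := by
    simp [hf1def, hDdef]
  have hdiff : Differentiable ℝ f := fun t => (hf t).differentiableAt
  have hderiv : deriv f = f1 := funext fun t => (hf t).deriv
  have hf0 : f 0 = 0 := by simp [hfdef, hDdef]
  have hfnn : ∀ t, 0 ≤ f t := by
    intro t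
    rcases le_total 0 t with h | h
    · have hmono : MonotoneOn f (Set.Ici 0) :=
        monotoneOn_of_deriv_nonneg (convex_Ici 0) hdiff.continuous.continuousOn
          hdiff.differentiableOn (fun x hx => by
            rw [hderiv, ← hf10]
            exact hmono1 (le_of_lt (by simpa using hx)))
      have := hmono Set.self_mem_Ici h h
      rwa [hf0] at this
    · have hanti : AntitoneOn f (Set.Iic 0) :=
        antitoneOn_of_deriv_nonpos (convex_Iic 0) hdiff.continuous.continuousOn
          hdiff.differentiableOn (fun x hx => by
            rw [hderiv, ← hf10]
            exact hmono1 (le_of_lt (by simpa using hx)))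
      have := hanti h Set.self_mem_Iic h
      rwa [hf0] at this
  have := hfnn t
  have hlog : Real.log (D t) ≤ p * t + t ^ 2 / 8 := by
    rw [hfdef] at this
    simp only at this
    linarith
  have := (Real.log_le_iff_le_exp (hD t)).mp hlog
  simpa [hDdef] using this

lemma mgf_bdd_le {Ω : Type*} [MeasurableSpace Ω] (Pr : Measure Ω) [IsProbabilityMeasure Pr]
    {X : Ω → ℝ} (hX : Measurable X) {b μ : ℝ} (hb : 0 < b) (hμ0 : 0 ≤ μ) (hμb : μ ≤ b)
    (hbdd : ∀ ω, X ω ∈ Set.Icc (0 : ℝ) b) (hmean : ∫ ω, X ω ∂Pr = μ) (u : ℝ) :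
    mgf X Pr u ≤ Real.exp (μ * u + (u * b) ^ 2 / 8) := by
  have hXint : Integrable X Pr := by
    refine (integrable_const b).mono' hX.aestronglyMeasurable ?_
    filter_upwards with ω
    have := hbdd ω
    rw [Real.norm_eq_abs, abs_le]
    constructor <;> [linarith [this.1, hb]; exact this.2]
  have hptw : ∀ ω, Real.exp (u * X ω) ≤ 1 - X ω / b + (X ω / b) * Real.exp (u * b) := by
    intro ω
    obtain ⟨hx0, hxb⟩ := hbdd ω
    set θ : ℝ := X ω / b with hθ
    have hθ0 : 0 ≤ θ := div_nonneg hx0 hb.le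
    have hθ1 : θ ≤ 1 := (div_le_one hb).mpr hxb
    have := convexOn_exp.2 (Set.mem_univ (0 : ℝ)) (Set.mem_univ (u * b))
      (by linarith : (0:ℝ) ≤ 1 - θ) hθ0 (by ring)
    simp only [smul_eq_mul, mul_zero, Real.exp_zero, mul_one, zero_add] at this
    have harg : θ * (u * b) = u * X ω := by
      rw [hθ, mul_comm u b, ← mul_assoc, div_mul_cancel₀ _ hb.ne']
      ring
    rw [harg] at this
    linarith
  have hexpint : Integrable (fun ω => Real.exp (u * X ω)) Pr := by
    refine (integrable_const (Real.exp (|u| * b))).mono'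
      ((hX.const_mul u).exp).aestronglyMeasurable ?_
    filter_upwards with ω
    obtain ⟨hx0, hxb⟩ := hbdd ω
    rw [Real.norm_eq_abs, abs_of_pos (Real.exp_pos _), Real.exp_le_exp]
    calc u * X ω ≤ |u| * X ω := mul_le_mul_of_nonneg_right (le_abs_self u) hx0
      _ ≤ |u| * b := mul_le_mul_of_nonneg_left hxb (abs_nonneg u)
  have hRHSint : Integrable (fun ω => 1 - X ω / b + (X ω / b) * Real.exp (u * b)) Pr := by
    apply Integrable.add
    · exact (integrable_const 1).sub (hXint.div_const b)
    · exact (hXint.div_const b).mul_const _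
  have hstep : mgf X Pr u ≤ 1 - μ / b + (μ / b) * Real.exp (u * b) := by
    rw [mgf]
    calc ∫ ω, Real.exp (u * X ω) ∂Pr
        ≤ ∫ ω, (1 - X ω / b + (X ω / b) * Real.exp (u * b)) ∂Pr :=
          integral_mono hexpint hRHSint hptw
      _ = 1 - μ / b + (μ / b) * Real.exp (u * b) := by
          have h1 : Integrable (fun ω => 1 - X ω / b) Pr :=
            (integrable_const 1).sub (hXint.div_const b)
          have h2 : Integrable (fun ω => (X ω / b) * Real.exp (u * b)) Pr :=
            (hXint.div_const b).mul_const _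
          have h3 : Integrable (fun ω => X ω / b) Pr := hXint.div_const b
          rw [integral_add h1 h2, integral_sub (integrable_const 1) h3,
            integral_mul_const, integral_div, integral_const, hmean]
          simp
  refine hstep.trans ?_
  have hkey := hoeff_key (p := μ / b) (div_nonneg hμ0 hb.le) ((div_le_one hb).mpr hμb) (u * b)
  have harg : μ / b * (u * b) = μ * u := by field_simp
  rwa [harg] at hkey

lemma integrable_exp_bdd {Ω : Type*} [MeasurableSpace Ω] (Pr : Measure Ω)
    [IsProbabilityMeasure Pr] {X : Ω → ℝ} (hX : Measurable X) {b : ℝ}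
    (hbdd : ∀ ω, X ω ∈ Set.Icc (0 : ℝ) b) (u : ℝ) :
    Integrable (fun ω => Real.exp (u * X ω)) Pr := by
  refine (integrable_const (Real.exp (|u| * b))).mono'
    ((hX.const_mul u).exp).aestronglyMeasurable ?_
  filter_upwards with ω
  obtain ⟨hx0, hxb⟩ := hbdd ω
  rw [Real.norm_eq_abs, abs_of_pos (Real.exp_pos _), Real.exp_le_exp]
  calc u * X ω ≤ |u| * X ω := mul_le_mul_of_nonneg_right (le_abs_self u) hx0
    _ ≤ |u| * b := mul_le_mul_of_nonneg_left hxb (abs_nonneg u)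

lemma row_chernoff {Ω : Type*} [MeasurableSpace Ω] (Pr : Measure Ω) [IsProbabilityMeasure Pr]
    {n : ℕ} {X : Fin n → Ω → ℝ} (hmeas : ∀ i, Measurable (X i))
    (hindep : iIndepFun X Pr)
    {b μ τ : ℝ} (hb : 0 < b) (hμ0 : 0 ≤ μ) (hμb : μ ≤ b) (hτ : 0 < τ)
    (hbdd : ∀ i ω, X i ω ∈ Set.Icc (0 : ℝ) b) (hmean : ∀ i, ∫ ω, X i ω ∂Pr = μ) :
    (Pr {ω | (∑ i, X i) ω ≤ n * (μ - τ)}).toReal ≤ Real.exp (-(2 * n * τ ^ 2 / b ^ 2)) := by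
  set s : ℝ := 4 * τ / b ^ 2 with hs_def
  have hs : 0 < s := by positivity
  have hexpint : ∀ i, Integrable (fun ω => Real.exp (-s * X i ω)) Pr :=
    fun i => integrable_exp_bdd Pr (hmeas i) (hbdd i) (-s)
  have hint : Integrable (fun ω => Real.exp (-s * (∑ i, X i) ω)) Pr :=
    hindep.integrable_exp_mul_sum hmeas (fun i _ => hexpint i)
  have hch := measure_le_le_exp_mul_mgf (μ := Pr) (X := ∑ i, X i) (t := -s)
    ((n : ℝ) * (μ - τ)) (by linarith) hint
  have hmgf : mgf (∑ i, X i) Pr (-s) = ∏ i, mgf (X i) Pr (-s) :=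
    hindep.mgf_sum hmeas Finset.univ
  have hbound : mgf (∑ i, X i) Pr (-s) ≤ Real.exp (μ * (-s) + ((-s) * b) ^ 2 / 8) ^ n := by
    rw [hmgf]
    calc ∏ i, mgf (X i) Pr (-s)
        ≤ ∏ _i : Fin n, Real.exp (μ * (-s) + ((-s) * b) ^ 2 / 8) :=
          Finset.prod_le_prod (fun i _ => mgf_nonneg)
            (fun i _ => mgf_bdd_le Pr (hmeas i) hb hμ0 hμb (hbdd i) (hmean i) (-s))
      _ = Real.exp (μ * (-s) + ((-s) * b) ^ 2 / 8) ^ n := by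
          rw [Finset.prod_const, Finset.card_univ, Fintype.card_fin]
  calc (Pr {ω | (∑ i, X i) ω ≤ n * (μ - τ)}).toReal
      ≤ Real.exp (-(-s) * ((n : ℝ) * (μ - τ))) * mgf (∑ i, X i) Pr (-s) := hch
    _ ≤ Real.exp (-(-s) * ((n : ℝ) * (μ - τ))) * Real.exp (μ * (-s) + ((-s) * b) ^ 2 / 8) ^ n :=
        mul_le_mul_of_nonneg_left hbound (Real.exp_pos _).le
    _ = Real.exp (-(2 * n * τ ^ 2 / b ^ 2)) := by
        rw [← Real.exp_nat_mul, ← Real.exp_add]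
        congr 1
        have hb' : (b : ℝ) ≠ 0 := hb.ne'
        field_simp [hs_def]
        rw [hs_def]
        field_simp
        ring

lemma iIndepFun_precomp {Ω ι κ : Type*} [MeasurableSpace Ω] {Pr : Measure Ω}
    {f : ι → Ω → ℝ} (g : κ → ι) (hg : Function.Injective g)
    (h : iIndepFun f Pr) :
    iIndepFun (fun k => f (g k)) Pr := by
  classical
  rw [iIndepFun_iff_measure_inter_preimage_eq_mul] at h ⊢
  intro S sets hsets
  set sets' : ι → Set ℝ := fun i =>
    if hex : ∃ k ∈ S, g k = i then sets hex.choose else Set.univ with hsets'def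
  have hsets' : ∀ k ∈ S, sets' (g k) = sets k := by
    intro k hk
    have hex : ∃ k' ∈ S, g k' = g k := ⟨k, hk, rfl⟩
    simp only [hsets'def, dif_pos hex]
    obtain ⟨_, h2⟩ := hex.choose_spec
    rw [hg h2]
  have key := h (S.map ⟨g, hg⟩) (sets := sets') (by
    intro i hi
    rw [Finset.mem_map] at hi
    obtain ⟨k, hk, rfl⟩ := hi
    show MeasurableSet (sets' (g k))
    rw [hsets' k hk]
    exact hsets k hk)
  rw [Finset.prod_map] at key
  have hInt : (⋂ i ∈ S.map ⟨g, hg⟩, f i ⁻¹' sets' i) = ⋂ k ∈ S, f (g k) ⁻¹' sets k := by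
    ext ω
    simp only [Set.mem_iInter, Finset.mem_map, Function.Embedding.coeFn_mk]
    constructor
    · intro hmem k hk
      have := hmem (g k) ⟨k, hk, rfl⟩
      rwa [hsets' k hk] at this
    · rintro hmem i ⟨k, hk, rfl⟩
      rw [hsets' k hk]
      exact hmem k hk
  rw [hInt] at key
  rw [key]
  exact Finset.prod_congr rfl fun k hk => by
    show Pr (f (g k) ⁻¹' sets' (g k)) = Pr (f (g k) ⁻¹' sets k)
    rw [hsets' k hk]

/-- For i.i.d. entries in `[0,b]` with mean `μ`, with probability at least
`1 - 1/m` the dualized uncertainty set `{w ≥ 0 : B̃ᵀw ≤ d̄e}` is contained in the scaled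
simplex `{w ≥ 0 : Σⱼ wⱼ ≤ d̄/(μ-τ)}` with `τ = b√(log m / n)`. -/
theorem dual_set_in_simplex_bounded (m n : ℕ) (hm : 2 ≤ m) (hn : 1 ≤ n)
    (b μ dbar : ℝ) (hb : 0 < b) (hμ0 : 0 < μ) (hμb : μ ≤ b) (hdbar : 0 < dbar)
    (τ : ℝ) (hτ : τ = b * Real.sqrt (Real.log m / n)) (hμτ : τ < μ)
    {Ω : Type} [MeasurableSpace Ω] (Pr : Measure Ω) [IsProbabilityMeasure Pr]
    (Bt : Fin m → Fin n → Ω → ℝ)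
    (hmeas : ∀ j i, Measurable (Bt j i))
    (hindep : iIndepFun
      (fun p : Fin m × Fin n => Bt p.1 p.2) Pr)
    (hident : ∀ j i j' i', IdentDistrib (Bt j i) (Bt j' i') Pr Pr)
    (hbdd : ∀ j i ω, Bt j i ω ∈ Set.Icc (0 : ℝ) b)
    (hmean : ∀ j i, ∫ ω, Bt j i ω ∂Pr = μ) :
    ENNReal.ofReal (1 - 1 / m) ≤
      Pr {ω | ∀ w : Fin m → ℝ, 0 ≤ w →
          (Matrix.of fun j i => Bt j i ω)ᵀ *ᵥ w ≤ (fun _ => dbar) →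
          ∑ j, w j ≤ dbar / (μ - τ)} := by
  have hm1 : (1 : ℝ) < m := by exact_mod_cast Nat.lt_of_lt_of_le one_lt_two hm
  have hm0 : (0 : ℝ) < m := by linarith
  have hn0 : (0 : ℝ) < n := by exact_mod_cast hn
  have hlogm : 0 < Real.log m := Real.log_pos hm1
  have hτpos : 0 < τ := by
    rw [hτ]
    have : 0 < Real.log m / n := by positivity
    positivity
  have hτsq : τ ^ 2 = b ^ 2 * (Real.log m / n) := by
    rw [hτ, mul_pow, Real.sq_sqrt (by positivity)]
  -- the bad events
  set c : ℝ := (n : ℝ) * (μ - τ) with hc_def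
  have hcpos : 0 < c := by
    have : 0 < μ - τ := by linarith
    positivity
  set bad : Fin m → Set Ω := fun j => {ω | (∑ i, Bt j i) ω ≤ c} with hbad_def
  have hbadmeas : ∀ j, MeasurableSet (bad j) := by
    intro j
    have heq : (∑ i, Bt j i) = fun ω => ∑ i, Bt j i ω :=
      funext fun ω => by simp [Finset.sum_apply]
    have hSm : Measurable (∑ i, Bt j i) := by
      rw [heq]
      exact Finset.measurable_sum _ fun i _ => hmeas j i
    exact measurableSet_le hSm measurable_const
  -- row independence
  have hrowIndep : ∀ j : Fin m, iIndepFun (fun i => Bt j i) Pr := by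
    intro j
    have hinj : Function.Injective (fun i : Fin n => ((j, i) : Fin m × Fin n)) := by
      intro a a' h
      simpa using congrArg Prod.snd h
    exact iIndepFun_precomp (f := fun p : Fin m × Fin n => Bt p.1 p.2) (fun i : Fin n => ((j, i) : Fin m × Fin n)) hinj hindep
  -- per-row tail bound
  have htail : ∀ j, (Pr (bad j)).toReal ≤ 1 / (m : ℝ) ^ 2 := by
    intro j
    have := row_chernoff Pr (fun i => hmeas j i) (hrowIndep j) hb hμ0.le hμb hτpos
      (fun i => hbdd j i) (fun i => hmean j i)
    refine this.trans ?_
    have hexp : -(2 * (n : ℝ) * τ ^ 2 / b ^ 2) = -(2 * Real.log m) := by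
      rw [hτsq]
      field_simp
    rw [hexp]
    have : Real.exp (-(2 * Real.log m)) = ((m : ℝ) ^ 2)⁻¹ := by
      rw [show -(2 * Real.log m) = Real.log (((m : ℝ) ^ 2)⁻¹) by
        rw [Real.log_inv, Real.log_pow]; push_cast; ring]
      exact Real.exp_log (by positivity)
    rw [this, one_div]
  have hPrbad : ∀ j, Pr (bad j) ≤ ENNReal.ofReal (1 / (m : ℝ) ^ 2) := by
    intro j
    rw [ENNReal.le_ofReal_iff_toReal_le (measure_ne_top _ _) (by positivity)]
    exact htail j
  -- union bound
  have hunion : Pr (⋃ j, bad j) ≤ ENNReal.ofReal (1 / m) := by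
    calc Pr (⋃ j, bad j) ≤ ∑' j, Pr (bad j) := measure_iUnion_le _
      _ = ∑ j, Pr (bad j) := tsum_fintype _
      _ ≤ ∑ _j : Fin m, ENNReal.ofReal (1 / (m : ℝ) ^ 2) :=
          Finset.sum_le_sum fun j _ => hPrbad j
      _ = (m : ℕ) • ENNReal.ofReal (1 / (m : ℝ) ^ 2) := by
          rw [Finset.sum_const, Finset.card_univ, Fintype.card_fin]
      _ = ENNReal.ofReal ((m : ℝ) * (1 / (m : ℝ) ^ 2)) := by
          rw [nsmul_eq_mul, ← ENNReal.ofReal_natCast m, ← ENNReal.ofReal_mul (by positivity)]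
      _ = ENNReal.ofReal (1 / m) := by
          congr 1
          field_simp
  -- complement of union is inside the target set
  have hsub : (⋃ j, bad j)ᶜ ⊆ {ω | ∀ w : Fin m → ℝ, 0 ≤ w →
      (Matrix.of fun j i => Bt j i ω)ᵀ *ᵥ w ≤ (fun _ => dbar) →
      ∑ j, w j ≤ dbar / (μ - τ)} := by
    intro ω hω
    simp only [Set.mem_compl_iff, Set.mem_iUnion, not_exists, hbad_def,
      Set.mem_setOf_eq, not_le] at hω
    intro w hw hmul
    have hw' : ∀ j, 0 ≤ w j := fun j => hw j
    have h1 : ∀ i, ∑ j, Bt j i ω * w j ≤ dbar := by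
      intro i
      have := hmul i
      simpa [Matrix.mulVec, dotProduct, Matrix.transpose_apply, Matrix.of_apply] using this
    have hsum : c * ∑ j, w j ≤ (n : ℝ) * dbar := by
      calc c * ∑ j, w j = ∑ j, w j * c := by
            rw [Finset.mul_sum]
            exact Finset.sum_congr rfl fun j _ => by ring
        _ ≤ ∑ j, w j * (∑ i, Bt j i) ω :=
            Finset.sum_le_sum fun j _ =>
              mul_le_mul_of_nonneg_left (hω j).le (hw' j)
        _ = ∑ j, ∑ i, Bt j i ω * w j := Finset.sum_congr rfl fun j _ => by
            rw [Finset.sum_apply, Finset.mul_sum]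
            exact Finset.sum_congr rfl fun i _ => by ring
        _ = ∑ i, ∑ j, Bt j i ω * w j := Finset.sum_comm
        _ ≤ ∑ _i : Fin n, dbar := Finset.sum_le_sum fun i _ => h1 i
        _ = (n : ℝ) * dbar := by rw [Finset.sum_const, Finset.card_univ, Fintype.card_fin,
            nsmul_eq_mul]
    have hμτ' : 0 < μ - τ := by linarith
    rw [le_div_iff₀ hμτ']
    have : (n : ℝ) * ((∑ j, w j) * (μ - τ)) ≤ (n : ℝ) * dbar := by
      calc (n : ℝ) * ((∑ j, w j) * (μ - τ)) = c * ∑ j, w j := by rw [hc_def]; ring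
        _ ≤ (n : ℝ) * dbar := hsum
    exact le_of_mul_le_mul_left this hn0
  -- conclude
  have hm_inv : ENNReal.ofReal (1 - 1 / (m : ℝ)) = 1 - ENNReal.ofReal (1 / m) := by
    rw [ENNReal.ofReal_sub _ (by positivity), ENNReal.ofReal_one]
  refine le_trans ?_ (measure_mono hsub)
  calc ENNReal.ofReal (1 - 1 / (m : ℝ)) = 1 - ENNReal.ofReal (1 / m) := hm_inv
    _ ≤ 1 - Pr (⋃ j, bad j) := tsub_le_tsub_left hunion 1
    _ = Pr ((⋃ j, bad j)ᶜ) := (prob_compl_eq_one_sub (MeasurableSet.iUnion hbadmeas)).symm
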